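/- Let 1 < k < n - l ≤ n and l ≥ 2k+1, with n sufficiently large (e.g., n > 2l). Let Φ = {1,...,k} ∪ {n-k+1,...,n} and Δ = {t ∈ {1,...,n} : t ≡ s (mod l) for some s ∈ Φ}. Then Δ is a proper subset of {1,...,n} invariant under r_n, r_{n-l}, and r_k, and hence ⟨r_n, r_{n-l}, r_k⟩ is a proper subgroup of Sym_n. -/

import Mathlib

def pr (n i : ℕ) : Equiv.Perm (Fin n) :=
  Function.Involutive.toPerm
    (fun x => if h : x.val < i ∧ i ≤ n then ⟨i - 1 - x.val, by omega⟩ else x)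
    (by
      intro x
      apply Fin.ext
      dsimp only
      split_ifs with h1 h2 h3 <;> simp_all <;> omega)

lemma pr_apply (n i : ℕ) (x : Fin n) :
    pr n i x = if h : x.val < i ∧ i ≤ n then ⟨i - 1 - x.val, by omega⟩ else x := rfl

lemma pr_invol (n i : ℕ) (x : Fin n) : pr n i (pr n i x) = x := by
  apply Function.Involutive.toPerm_involutive

lemma flip_mod {l m t s : ℕ} (ht : t ≤ m) (hs : s ≤ m) (h : t % l = s % l) :
    (m - t) % l = (m - s) % l := by
  have h1 : (m - t) + t = (m - s) + s := by omega
  have h2 : Nat.ModEq l ((m-t)+t) ((m-s)+s) := by rw [h1]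
  exact Nat.ModEq.add_right_cancel h h2

open Pointwise in
theorem stmt8 (n k l : ℕ) (hk : 1 < k) (hknl : k < n - l) (hl : 2 * k + 1 ≤ l)
    (hn : 2 * l < n) :
    ({x : Fin n | ∃ s : ℕ, ((1 ≤ s ∧ s ≤ k) ∨ (n - k + 1 ≤ s ∧ s ≤ n)) ∧
        (x.val + 1) % l = s % l} : Set (Fin n)) ≠ Set.univ ∧
    (∀ x : Fin n, (∃ s : ℕ, ((1 ≤ s ∧ s ≤ k) ∨ (n - k + 1 ≤ s ∧ s ≤ n)) ∧
        (x.val + 1) % l = s % l) →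
      ∀ g ∈ ({pr n n, pr n (n - l), pr n k} : Set (Equiv.Perm (Fin n))),
        ∃ s : ℕ, ((1 ≤ s ∧ s ≤ k) ∨ (n - k + 1 ≤ s ∧ s ≤ n)) ∧
          ((g x).val + 1) % l = s % l) ∧
    Subgroup.closure ({pr n n, pr n (n - l), pr n k} : Set (Equiv.Perm (Fin n))) ≠ ⊤ := by
  have hln : l < n := by omega
  have hkn : k < n := by omega
  have hl0 : 0 < l := by omega
  -- the invariance statement
  have h2 : ∀ x : Fin n, (∃ s : ℕ, ((1 ≤ s ∧ s ≤ k) ∨ (n - k + 1 ≤ s ∧ s ≤ n)) ∧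
        (x.val + 1) % l = s % l) →
      ∀ g ∈ ({pr n n, pr n (n - l), pr n k} : Set (Equiv.Perm (Fin n))),
        ∃ s : ℕ, ((1 ≤ s ∧ s ≤ k) ∨ (n - k + 1 ≤ s ∧ s ≤ n)) ∧
          ((g x).val + 1) % l = s % l := by
    rintro x ⟨s, hs, hmod⟩ g hg
    have hxlt := x.isLt
    have hsn : s ≤ n := by omega
    simp only [Set.mem_insert_iff, Set.mem_singleton_iff] at hg
    rcases hg with rfl | rfl | rfl
    · -- pr n n
      rw [pr_apply, dif_pos ⟨hxlt, le_refl n⟩]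
      refine ⟨n + 1 - s, by omega, ?_⟩
      have e : n - 1 - x.val + 1 = n + 1 - (x.val + 1) := by omega
      rw [e]
      exact flip_mod (by omega) (by omega) hmod
    · -- pr n (n - l)
      by_cases hx : x.val < n - l
      · rw [pr_apply, dif_pos ⟨hx, by omega⟩]
        refine ⟨n + 1 - s, by omega, ?_⟩
        have e1 : n - l - 1 - x.val + 1 = (n + 1 - (x.val + 1)) - l := by omega
        have e2 : n + 1 - (x.val + 1) = ((n + 1 - (x.val + 1)) - l) + l := by omega
        rw [e1]
        have := flip_mod (l := l) (m := n + 1) (by omega) (by omega) hmod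
        rw [e2, Nat.add_mod_right] at this
        exact this
      · rw [pr_apply, dif_neg (fun h => hx h.1)]
        exact ⟨s, hs, hmod⟩
    · -- pr n k
      by_cases hx : x.val < k
      · rw [pr_apply, dif_pos ⟨hx, by omega⟩]
        exact ⟨k - 1 - x.val + 1, Or.inl ⟨by omega, by omega⟩, rfl⟩
      · rw [pr_apply, dif_neg (fun h => hx h.1)]
        exact ⟨s, hs, hmod⟩
  -- a point outside the set
  obtain ⟨y, hy⟩ : ∃ y : Fin n, ¬ (∃ s : ℕ, ((1 ≤ s ∧ s ≤ k) ∨ (n - k + 1 ≤ s ∧ s ≤ n)) ∧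
      (y.val + 1) % l = s % l) := by
    set Φf : Finset ℕ := Finset.Icc 1 k ∪ Finset.Icc (n - k + 1) n with hΦf
    set S : Finset ℕ := Φf.image (· % l) with hS
    have hcard : S.card ≤ 2 * k := by
      refine le_trans Finset.card_image_le ?_
      refine le_trans (Finset.card_union_le _ _) ?_
      simp [Nat.card_Icc]
      omega
    have hns : ¬ (Finset.range l ⊆ S) := by
      intro h
      have := Finset.card_le_card h
      simp at this
      omega
    obtain ⟨r, hr, hrS⟩ := Finset.not_subset.mp hns
    simp only [Finset.mem_range] at hr
    set t : ℕ := if r = 0 then l else r with ht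
    have htl : t % l = r := by
      rcases eq_or_ne r 0 with h0 | h0
      · simp [ht, h0, Nat.mod_self]
      · simp [ht, h0, Nat.mod_eq_of_lt hr]
    have ht1 : 1 ≤ t := by rcases eq_or_ne r 0 with h0 | h0 <;> simp [ht, h0] <;> omega
    have htn : t ≤ n := by rcases eq_or_ne r 0 with h0 | h0 <;> simp [ht, h0] <;> omega
    refine ⟨⟨t - 1, by omega⟩, ?_⟩
    rintro ⟨s, hs, hmod⟩
    apply hrS
    rw [hS, Finset.mem_image]
    refine ⟨s, ?_, ?_⟩
    · rw [hΦf, Finset.mem_union, Finset.mem_Icc, Finset.mem_Icc]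
      omega
    · simp only at hmod ⊢
      rw [← hmod]
      have : t - 1 + 1 = t := by omega
      rw [this] at hmod ⊢
      exact htl.symm ▸ htl
  refine ⟨?_, h2, ?_⟩
  · intro hEq
    rw [Set.eq_univ_iff_forall] at hEq
    exact hy (hEq y)
  · intro hc
    set Δ : Set (Fin n) := {x : Fin n | ∃ s : ℕ,
      ((1 ≤ s ∧ s ≤ k) ∨ (n - k + 1 ≤ s ∧ s ≤ n)) ∧ (x.val + 1) % l = s % l} with hΔ
    have hle : Subgroup.closure ({pr n n, pr n (n - l), pr n k} : Set (Equiv.Perm (Fin n)))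
        ≤ MulAction.stabilizer (Equiv.Perm (Fin n)) Δ := by
      rw [Subgroup.closure_le]
      intro g hg
      have hinvol : ∀ z : Fin n, g (g z) = z := by
        simp only [Set.mem_insert_iff, Set.mem_singleton_iff] at hg
        rcases hg with rfl | rfl | rfl <;> exact pr_invol n _
      have hpres : ∀ z ∈ Δ, g z ∈ Δ := fun z hz => h2 z hz g hg
      simp only [SetLike.mem_coe, MulAction.mem_stabilizer_iff]
      ext z
      rw [Set.mem_smul_set]
      constructor
      · rintro ⟨w, hw, rfl⟩
        exact hpres w hw
      · intro hz
        exact ⟨g z, hpres z hz, hinvol z⟩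
    have hx0 : (⟨0, by omega⟩ : Fin n) ∈ Δ := ⟨1, Or.inl ⟨le_refl 1, by omega⟩, rfl⟩
    have hswap : Equiv.swap (⟨0, by omega⟩ : Fin n) y ∈
        MulAction.stabilizer (Equiv.Perm (Fin n)) Δ := by
      apply hle
      rw [hc]
      trivial
    rw [MulAction.mem_stabilizer_iff] at hswap
    apply hy
    have : Equiv.swap (⟨0, by omega⟩ : Fin n) y • (⟨0, by omega⟩ : Fin n) ∈ Δ := by
      rw [← hswap]
      exact Set.smul_mem_smul_set hx0
    exact (by simpa [Equiv.Perm.smul_def, Equiv.swap_apply_left] using this : y ∈ Δ)
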